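/- Let p ≥ n−1 ≥ 5 and write p = k(n−1)+r with k ≥ 1 and r ∈ {0,1,…,n−2}. If r ∈ {0, n−4, n−3, n−2}, then ex(p;T_n*) = ((n−2)p − r(n−1−r))/2. -/

import Mathlib

open SimpleGraph

/-- `G` contains a copy of `H` as a subgraph: there is an injective map
preserving adjacency. -/
def ContainsCopy {V : Type*} {W : Type*} (G : SimpleGraph V) (H : SimpleGraph W) : Prop :=
  ∃ f : W ↪ V, ∀ a b, H.Adj a b → G.Adj (f a) (f b)

/-- `exNum p H` is the maximal number of edges in a simple graph of order `p`
not containing a copy of `H`. -/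
noncomputable def exNum (p : ℕ) {W : Type*} (H : SimpleGraph W) : ℕ :=
  sSup {m : ℕ | ∃ G : SimpleGraph (Fin p), ¬ ContainsCopy G H ∧ Nat.card G.edgeSet = m}

/-- `exNum2 p H₁ H₂` is the maximal number of edges in a simple graph of order `p`
containing no copy of `H₁` and no copy of `H₂`. -/
noncomputable def exNum2 (p : ℕ) {W₁ W₂ : Type*} (H₁ : SimpleGraph W₁) (H₂ : SimpleGraph W₂) : ℕ :=
  sSup {m : ℕ | ∃ G : SimpleGraph (Fin p),
    ¬ ContainsCopy G H₁ ∧ ¬ ContainsCopy G H₂ ∧ Nat.card G.edgeSet = m}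

/-- The tree `T_n` on vertices `v_0, …, v_{n-1}` with edges
`v_0v_1, …, v_0v_{n-2}` and `v_{n-2}v_{n-1}`: the unique tree on `n` vertices
of maximal degree `n-2`. -/
def Tn (n : ℕ) : SimpleGraph (Fin n) :=
  SimpleGraph.fromRel (fun a b =>
    (a.val = 0 ∧ 1 ≤ b.val ∧ b.val ≤ n - 2) ∨ (a.val = n - 2 ∧ b.val = n - 1))

/-- The tree `T_n^*` on vertices `v_0, …, v_{n-1}` with edges
`v_0v_1, …, v_0v_{n-3}`, `v_{n-3}v_{n-2}` and `v_{n-2}v_{n-1}`. -/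
def TnStar (n : ℕ) : SimpleGraph (Fin n) :=
  SimpleGraph.fromRel (fun a b =>
    (a.val = 0 ∧ 1 ≤ b.val ∧ b.val ≤ n - 3) ∨ (a.val = n - 3 ∧ b.val = n - 2) ∨
    (a.val = n - 2 ∧ b.val = n - 1))


open Finset

/-- the "loss" function for a connected component of given order. -/
def ell (n m : ℕ) : ℕ :=
  if m ≤ n - 1 then m * (n - 1 - m) else if m = 2 * n - 5 then 3 * (n - 4) else m

section KeyLemma
set_option linter.unusedSectionVars false
variable {n : ℕ} {V : Type} [Fintype V] [DecidableEq V]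

lemma key (hn : 6 ≤ n) (G : SimpleGraph V) [DecidableRel G.Adj]
    (hfree : ¬ ContainsCopy G (TnStar n)) {a b c d : V}
    (hab : G.Adj a b) (hbc : G.Adj b c) (hcd : G.Adj c d)
    (hac : a ≠ c) (had : a ≠ d) (hbd : b ≠ d) :
    (G.neighborFinset a \ {b, c, d}).card ≤ n - 5 := by
  by_contra hcon
  push_neg at hcon
  obtain ⟨W, hWsub, hWcard⟩ := Finset.exists_subset_card_eq
    (show n - 4 ≤ (G.neighborFinset a \ {b, c, d}).card by omega)
  -- the enumeration of W
  have hg : ∃ g : Fin (n-4) → V, Function.Injective g ∧ ∀ i, g i ∈ W := by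
    refine ⟨fun i => (W.equivFin.symm ⟨i.val, by omega⟩ : W).val, ?_, fun i => (W.equivFin.symm _).2⟩
    intro i j hij
    have := W.equivFin.symm.injective (Subtype.ext hij)
    simpa [Fin.ext_iff] using congrArg Fin.val this
  obtain ⟨g, hginj, hgW⟩ := hg
  have hWmem : ∀ u ∈ W, G.Adj a u ∧ u ≠ b ∧ u ≠ c ∧ u ≠ d := by
    intro u hu
    have := hWsub hu
    simp only [Finset.mem_sdiff, Finset.mem_insert, Finset.mem_singleton,
      SimpleGraph.mem_neighborFinset] at this
    tauto
  have hga : ∀ i, g i ≠ a := fun i h => G.irrefl (h ▸ (hWmem _ (hgW i)).1)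
  have hgb : ∀ i, g i ≠ b := fun i => (hWmem _ (hgW i)).2.1
  have hgc : ∀ i, g i ≠ c := fun i => (hWmem _ (hgW i)).2.2.1
  have hgd : ∀ i, g i ≠ d := fun i => (hWmem _ (hgW i)).2.2.2
  have hag : ∀ i, G.Adj a (g i) := fun i => (hWmem _ (hgW i)).1
  have hab' : a ≠ b := hab.ne
  have hbc' : b ≠ c := hbc.ne
  have hcd' : c ≠ d := hcd.ne
  set F : Fin n → V := fun i =>
    if h0 : i.val = 0 then a
    else if h1 : i.val ≤ n - 4 then g ⟨i.val - 1, by omega⟩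
    else if i.val = n - 3 then b
    else if i.val = n - 2 then c
    else d with hF
  have hF0 : ∀ i : Fin n, i.val = 0 → F i = a := by
    intro i h; simp only [hF, h]; norm_num
  have hFg : ∀ (i : Fin n) (h1 : 1 ≤ i.val) (h2 : i.val ≤ n - 4),
      F i = g ⟨i.val - 1, by omega⟩ := by
    intro i h1 h2; simp only [hF]
    rw [dif_neg (by omega), dif_pos h2]
  have hFb : ∀ i : Fin n, i.val = n - 3 → F i = b := by
    intro i h; simp only [hF]
    rw [dif_neg (by omega), dif_neg (by omega), if_pos h]
  have hFc : ∀ i : Fin n, i.val = n - 2 → F i = c := by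
    intro i h; simp only [hF]
    rw [dif_neg (by omega), dif_neg (by omega), if_neg (by omega), if_pos h]
  have hFd : ∀ i : Fin n, i.val = n - 1 → F i = d := by
    intro i h; simp only [hF]
    rw [dif_neg (by omega), dif_neg (by omega), if_neg (by omega), if_neg (by omega)]
  have hreg : ∀ i : Fin n, i.val = 0 ∨ (1 ≤ i.val ∧ i.val ≤ n - 4) ∨ i.val = n - 3
      ∨ i.val = n - 2 ∨ i.val = n - 1 := by
    intro i; have := i.isLt; omega
  have hinj : Function.Injective F := by
    intro i j h
    rcases hreg i with hi | hi | hi | hi | hi <;> rcases hreg j with hj | hj | hj | hj | hj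
    · exact Fin.ext (by omega)
    · rw [hF0 i hi, hFg j hj.1 hj.2] at h; exact absurd h.symm (hga _)
    · rw [hF0 i hi, hFb j hj] at h; exact absurd h hab'
    · rw [hF0 i hi, hFc j hj] at h; exact absurd h hac
    · rw [hF0 i hi, hFd j hj] at h; exact absurd h had
    · rw [hFg i hi.1 hi.2, hF0 j hj] at h; exact absurd h (hga _)
    · rw [hFg i hi.1 hi.2, hFg j hj.1 hj.2] at h
      have := hginj h; simp only [Fin.mk.injEq] at this; exact Fin.ext (by omega)
    · rw [hFg i hi.1 hi.2, hFb j hj] at h; exact absurd h (hgb _)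
    · rw [hFg i hi.1 hi.2, hFc j hj] at h; exact absurd h (hgc _)
    · rw [hFg i hi.1 hi.2, hFd j hj] at h; exact absurd h (hgd _)
    · rw [hFb i hi, hF0 j hj] at h; exact absurd h.symm hab'
    · rw [hFb i hi, hFg j hj.1 hj.2] at h; exact absurd h.symm (hgb _)
    · exact Fin.ext (by omega)
    · rw [hFb i hi, hFc j hj] at h; exact absurd h hbc'
    · rw [hFb i hi, hFd j hj] at h; exact absurd h hbd
    · rw [hFc i hi, hF0 j hj] at h; exact absurd h.symm hac
    · rw [hFc i hi, hFg j hj.1 hj.2] at h; exact absurd h.symm (hgc _)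
    · rw [hFc i hi, hFb j hj] at h; exact absurd h.symm hbc'
    · exact Fin.ext (by omega)
    · rw [hFc i hi, hFd j hj] at h; exact absurd h hcd'
    · rw [hFd i hi, hF0 j hj] at h; exact absurd h.symm had
    · rw [hFd i hi, hFg j hj.1 hj.2] at h; exact absurd h.symm (hgd _)
    · rw [hFd i hi, hFb j hj] at h; exact absurd h.symm hbd
    · rw [hFd i hi, hFc j hj] at h; exact absurd h.symm hcd'
    · exact Fin.ext (by omega)
  have hstep : ∀ x y : Fin n,
      ((x.val = 0 ∧ 1 ≤ y.val ∧ y.val ≤ n - 3) ∨ (x.val = n - 3 ∧ y.val = n - 2) ∨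
        (x.val = n - 2 ∧ y.val = n - 1)) → G.Adj (F x) (F y) := by
    rintro x y (⟨hx, hy1, hy2⟩ | ⟨hx, hy⟩ | ⟨hx, hy⟩)
    · rw [hF0 x hx]
      rcases le_or_gt y.val (n - 4) with hy4 | hy4
      · rw [hFg y hy1 hy4]; exact hag _
      · rw [hFb y (by omega)]; exact hab
    · rw [hFb x hx, hFc y hy]; exact hbc
    · rw [hFc x hx, hFd y hy]; exact hcd
  exact hfree ⟨⟨F, hinj⟩, by
    rintro x y ⟨hne, hrel | hrel⟩
    · exact hstep x y hrel
    · exact (hstep y x hrel).symm⟩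

lemma card_bcd_le (b c d : V) : ({b, c, d} : Finset V).card ≤ 3 :=
  (Finset.card_insert_le _ _).trans (by
    have := Finset.card_insert_le c ({d} : Finset V); simp at this ⊢; omega)

lemma keyA (hn : 6 ≤ n) (G : SimpleGraph V) [DecidableRel G.Adj]
    (hfree : ¬ ContainsCopy G (TnStar n)) {a b c d : V}
    (hdeg : n - 2 ≤ G.degree a)
    (hab : G.Adj a b) (hbc : G.Adj b c) (hcd : G.Adj c d)
    (hac : a ≠ c) (had : a ≠ d) (hbd : b ≠ d) :
    G.Adj a c ∧ G.Adj a d := by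
  have hk := key hn G hfree hab hbc hcd hac had hbd
  have h1 : (G.neighborFinset a \ {b, c, d}).card + (G.neighborFinset a ∩ {b, c, d}).card
      = (G.neighborFinset a).card := Finset.card_sdiff_add_card_inter _ _
  have h2 : (G.neighborFinset a).card = G.degree a := G.card_neighborFinset_eq_degree a
  have h3 : ({b, c, d} : Finset V).card ≤ 3 := card_bcd_le b c d
  have h4 : (G.neighborFinset a ∩ {b, c, d}) ⊆ {b, c, d} := Finset.inter_subset_right
  have h5 : ({b, c, d} : Finset V).card ≤ (G.neighborFinset a ∩ {b, c, d}).card := by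
    have := Finset.card_le_card h4; omega
  have h6 : (G.neighborFinset a ∩ {b, c, d}) = {b, c, d} :=
    Finset.eq_of_subset_of_card_le h4 h5
  have hcmem : c ∈ G.neighborFinset a ∩ {b, c, d} := by rw [h6]; simp
  have hdmem : d ∈ G.neighborFinset a ∩ {b, c, d} := by rw [h6]; simp
  exact ⟨(G.mem_neighborFinset a c).mp (Finset.mem_of_mem_inter_left hcmem),
    (G.mem_neighborFinset a d).mp (Finset.mem_of_mem_inter_left hdmem)⟩

lemma keyB (hn : 6 ≤ n) (G : SimpleGraph V) [DecidableRel G.Adj]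
    (hfree : ¬ ContainsCopy G (TnStar n)) {a b c d : V}
    (hdeg : n - 1 ≤ G.degree a)
    (hab : G.Adj a b) (hbc : G.Adj b c) (hcd : G.Adj c d)
    (hac : a ≠ c) (had : a ≠ d) (hbd : b ≠ d) : False := by
  have hk := key hn G hfree hab hbc hcd hac had hbd
  have h2 : (G.neighborFinset a).card = G.degree a := G.card_neighborFinset_eq_degree a
  have h3 : ({b, c, d} : Finset V).card ≤ 3 := card_bcd_le b c d
  have := Finset.card_le_card_sdiff_add_card (s := G.neighborFinset a) (t := {b, c, d})
  omega

lemma keyC (hn : 6 ≤ n) (G : SimpleGraph V) [DecidableRel G.Adj]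
    (hfree : ¬ ContainsCopy G (TnStar n)) {a b c d : V}
    (hdeg : n - 3 ≤ G.degree a)
    (hab : G.Adj a b) (hbc : G.Adj b c) (hcd : G.Adj c d)
    (hac : a ≠ c) (had : a ≠ d) (hbd : b ≠ d) :
    G.Adj a c ∨ G.Adj a d := by
  by_contra hcon
  push_neg at hcon
  obtain ⟨hnc, hnd⟩ := hcon
  have hk := key hn G hfree hab hbc hcd hac had hbd
  have h1 : (G.neighborFinset a \ {b, c, d}).card + (G.neighborFinset a ∩ {b, c, d}).card
      = (G.neighborFinset a).card := Finset.card_sdiff_add_card_inter _ _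
  have h2 : (G.neighborFinset a).card = G.degree a := G.card_neighborFinset_eq_degree a
  have h4 : (G.neighborFinset a ∩ {b, c, d}) ⊆ {b} := by
    intro x hx
    have hxn := Finset.mem_of_mem_inter_left hx
    have hxb := Finset.mem_of_mem_inter_right hx
    simp only [Finset.mem_insert, Finset.mem_singleton] at hxb ⊢
    rcases hxb with rfl | rfl | rfl
    · rfl
    · exact absurd ((G.mem_neighborFinset a x).mp hxn) hnc
    · exact absurd ((G.mem_neighborFinset a x).mp hxn) hnd
  have h5 := Finset.card_le_card h4
  simp only [Finset.card_singleton] at h5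
  omega

lemma cross (G : SimpleGraph V) [DecidableRel G.Adj] (A B : Finset V) :
    ∑ x ∈ A, (B ∩ G.neighborFinset x).card = ∑ y ∈ B, (A ∩ G.neighborFinset y).card := by
  have hkey : ∀ (C D : Finset V), ∑ x ∈ C, (D ∩ G.neighborFinset x).card
      = ∑ x ∈ C, ∑ y ∈ D, if G.Adj x y then 1 else 0 := by
    intro C D
    refine Finset.sum_congr rfl fun x _ => ?_
    have hfd : D ∩ G.neighborFinset x = D.filter (fun y => G.Adj x y) := by
      ext y
      simp [Finset.mem_inter, Finset.mem_filter, SimpleGraph.mem_neighborFinset]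
    rw [hfd, Finset.card_filter]
  rw [hkey, hkey, Finset.sum_comm]
  refine Finset.sum_congr rfl fun y _ => Finset.sum_congr rfl fun x _ => ?_
  exact if_congr (G.adj_comm x y) rfl rfl

lemma closureA (hn : 6 ≤ n) (G : SimpleGraph V) [DecidableRel G.Adj]
    (hfree : ¬ ContainsCopy G (TnStar n)) (hconn : G.Connected) {a : V}
    (hdeg : n - 2 ≤ G.degree a) :
    ∀ y : V, y = a ∨ G.Adj a y ∨ ∃ x, G.Adj a x ∧ G.Adj x y := by
  set T : V → Prop := fun y => y = a ∨ G.Adj a y ∨ ∃ x, G.Adj a x ∧ G.Adj x y with hT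
  have hstep : ∀ y w, T y → G.Adj y w → T w := by
    intro y w hy hyw
    by_cases hwa : w = a
    · exact Or.inl hwa
    by_cases hwn : G.Adj a w
    · exact Or.inr (Or.inl hwn)
    rcases hy with rfl | hy | ⟨x, hax, hxy⟩
    · exact Or.inr (Or.inl hyw)
    · exact Or.inr (Or.inr ⟨y, hy, hyw⟩)
    · by_cases hya : G.Adj a y
      · exact Or.inr (Or.inr ⟨y, hya, hyw⟩)
      · exfalso
        have hya' : y ≠ a := by rintro rfl; exact hwn hyw
        have hwx : w ≠ x := by rintro rfl; exact hwn hax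
        have h := keyA hn G hfree hdeg hax hxy hyw
          (fun h => hya' h.symm) (fun h => hwa h.symm) (fun h => hwx h.symm)
        exact hya h.1
  have hwalk : ∀ (u y : V) (w : G.Walk u y), T u → T y := by
    intro u y w
    induction w with
    | nil => exact id
    | cons h p ih => intro hu; exact ih (hstep _ _ hu h)
  intro y
  exact hwalk a y (hconn.preconnected a y).some (Or.inl rfl)

lemma closureQ (hn : 6 ≤ n) (G : SimpleGraph V) [DecidableRel G.Adj]
    (hfree : ¬ ContainsCopy G (TnStar n)) (hconn : G.Connected) {v : V}
    (hdeg : G.degree v = n - 3) :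
    ∀ y : V, y = v ∨ G.Adj v y ∨ (∀ w, G.Adj y w → G.Adj v w) := by
  set T : V → Prop := fun y => y = v ∨ G.Adj v y ∨ (∀ w, G.Adj y w → G.Adj v w) with hT
  have hstep : ∀ y w, T y → G.Adj y w → T w := by
    intro y w hy hyw
    rcases hy with rfl | hy | hy
    · exact Or.inr (Or.inl hyw)
    · by_cases hwv : w = v
      · exact Or.inl hwv
      by_cases hvw : G.Adj v w
      · exact Or.inr (Or.inl hvw)
      · refine Or.inr (Or.inr fun z hz => ?_)
        by_contra hvz
        have hzv : z ≠ v := by rintro rfl; exact hvw hz.symm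
        have hyz : y ≠ z := by rintro rfl; exact hvz hy
        have h := keyC hn G hfree (le_of_eq hdeg.symm) hy hyw hz
          (fun h => hwv h.symm) (fun h => hzv h.symm) hyz
        tauto
    · exact Or.inr (Or.inl (hy w hyw))
  have hwalk : ∀ (u y : V) (w : G.Walk u y), T u → T y := by
    intro u y w
    induction w with
    | nil => exact id
    | cons h p ih => intro hu; exact ih (hstep _ _ hu h)
  intro y
  exact hwalk v y (hconn.preconnected v y).some (Or.inl rfl)

set_option maxHeartbeats 2000000 in
lemma ubconn (hn : 6 ≤ n) (G : SimpleGraph V) [DecidableRel G.Adj]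
    (hconn : G.Connected) (hfree : ¬ ContainsCopy G (TnStar n)) :
    (∑ v, G.degree v) + ell n (Fintype.card V) ≤ (n - 2) * Fintype.card V := by
  set m := Fintype.card V with hm
  by_cases hsmall : m ≤ n - 1
  · rcases Nat.eq_zero_or_pos m with hm0 | hm0
    · have hV : IsEmpty V := Fintype.card_eq_zero_iff.mp (by omega)
      haveI := hV
      have hs : (∑ v, G.degree v) = 0 := by simp [Finset.univ_eq_empty]
      rw [ell, if_pos (by omega), hs, hm0]
      simp
    · have hdle : ∀ v : V, G.degree v ≤ m - 1 := by
        intro v; have := G.degree_lt_card_verts v; omega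
      have hsum : (∑ v, G.degree v) ≤ m * (m - 1) := by
        calc (∑ v, G.degree v) ≤ (univ : Finset V).card • (m-1) :=
              Finset.sum_le_card_nsmul _ _ _ (fun x _ => hdle x)
        _ = m * (m - 1) := by rw [smul_eq_mul, Finset.card_univ]
      rw [ell, if_pos hsmall]
      refine le_trans (Nat.add_le_add_right hsum _) ?_
      have h1 : (m - 1) + (n - 1 - m) = n - 2 := by omega
      calc m * (m - 1) + m * (n - 1 - m) = m * ((m - 1) + (n - 1 - m)) := by rw [Nat.mul_add]
        _ = (n - 2) * m := by rw [h1, Nat.mul_comm]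
        _ ≤ (n - 2) * m := le_rfl
  · -- big component
    have hmn : n ≤ m := by omega
    have hNE : Nonempty V := Fintype.card_pos_iff.mp (by omega)
    obtain ⟨a, -, hmax⟩ := Finset.exists_max_image (univ : Finset V)
      (fun v => G.degree v) univ_nonempty
    set D := G.degree a with hD
    have hmax' : ∀ v : V, G.degree v ≤ D := fun v => hmax v (mem_univ v)
    by_cases hD1 : n - 1 ≤ D
    · -- HIGH case
      set N := G.neighborFinset a with hNdef
      have haN : a ∉ N := by simp [hNdef]
      set Out := (univ : Finset V) \ insert a N with hOutdef
      have hND : N.card = D := G.card_neighborFinset_eq_degree a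
      have hmemOut : ∀ y, y ∈ Out ↔ (y ≠ a ∧ ¬ G.Adj a y) := by
        intro y; simp [hOutdef, hNdef]
      have hsplit : ∑ y ∈ Out, G.degree y + (G.degree a + ∑ x ∈ N, G.degree x)
          = ∑ v, G.degree v := by
        have h := Finset.sum_sdiff (f := fun v => G.degree v)
          (Finset.subset_univ (insert a N))
        rwa [Finset.sum_insert haN] at h
      have hcardOut : Out.card + (D + 1) = m := by
        have h1 : (insert a N).card = D + 1 := by rw [Finset.card_insert_of_notMem haN, hND]
        have h2 : Out.card = m - (D+1) := by
          rw [hOutdef, Finset.card_sdiff_of_subset (Finset.subset_univ _), h1, Finset.card_univ, ← hm]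
        have h3 : (insert a N).card ≤ m := by
          rw [hm, ← Finset.card_univ]; exact Finset.card_le_card (Finset.subset_univ _)
        omega
      have hCL := closureA hn G hfree hconn (show n - 2 ≤ G.degree a by omega)
      have houtdeg : ∀ y ∈ Out, G.degree y ≤ 1 := by
        intro y hy
        obtain ⟨hya, hyn⟩ := (hmemOut y).mp hy
        rcases hCL y with rfl | h | ⟨x, hax, hxy⟩
        · exact absurd rfl hya
        · exact absurd h hyn
        · have hallN : ∀ w, G.Adj y w → G.Adj a w := by
            intro w hw
            by_contra hwn'
            have hwa : w ≠ a := by rintro rfl; exact hyn hw.symm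
            have hwx : w ≠ x := by rintro rfl; exact hwn' hax
            have h := keyA hn G hfree (show n - 2 ≤ G.degree a by omega) hax hxy hw
              (Ne.symm hya) (fun h => hwa h.symm) (fun h => hwx h.symm)
            exact hyn h.1
          show (G.neighborFinset y).card ≤ 1
          refine Finset.card_le_one.mpr (fun w1 hw1 w2 hw2 => ?_)
          by_contra hne
          have haw1 : G.Adj y w1 := (G.mem_neighborFinset y w1).mp hw1
          have haw2 : G.Adj y w2 := (G.mem_neighborFinset y w2).mp hw2
          have h := keyA hn G hfree (show n - 2 ≤ G.degree a by omega)
            (hallN w1 haw1) haw1.symm haw2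
            (Ne.symm hya) (hallN w2 haw2).ne hne
          exact hyn h.1
      have hinN : ∀ x ∈ N, (N ∩ G.neighborFinset x).card ≤ 1 := by
        intro x hx
        refine Finset.card_le_one.mpr (fun w1 hw1 w2 hw2 => ?_)
        by_contra hne
        obtain ⟨hw1N, hw1x⟩ := Finset.mem_inter.mp hw1
        obtain ⟨hw2N, hw2x⟩ := Finset.mem_inter.mp hw2
        exact keyB hn G hfree (hD ▸ hD1)
          ((G.mem_neighborFinset a w1).mp hw1N)
          ((G.mem_neighborFinset x w1).mp hw1x).symm
          ((G.mem_neighborFinset x w2).mp hw2x)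
          ((G.mem_neighborFinset a x).mp hx).ne
          ((G.mem_neighborFinset a w2).mp hw2N).ne hne
      have hdegx : ∀ x ∈ N, G.degree x ≤ 2 + (Out ∩ G.neighborFinset x).card := by
        intro x hx
        have hsub : G.neighborFinset x ⊆
            insert a ((N ∩ G.neighborFinset x) ∪ (Out ∩ G.neighborFinset x)) := by
          intro w hw
          by_cases hwa : w = a
          · simp [hwa]
          · by_cases hwN : w ∈ N
            · simp [Finset.mem_insert, Finset.mem_union, Finset.mem_inter, hwN, hw]
            · have hwOut : w ∈ Out := by
                rw [hmemOut]
                exact ⟨hwa, fun h => hwN ((G.mem_neighborFinset a w).mpr h)⟩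
              simp [Finset.mem_insert, Finset.mem_union, Finset.mem_inter, hwOut, hw]
        calc G.degree x = (G.neighborFinset x).card := (G.card_neighborFinset_eq_degree x).symm
          _ ≤ (insert a ((N ∩ G.neighborFinset x) ∪ (Out ∩ G.neighborFinset x))).card :=
              Finset.card_le_card hsub
          _ ≤ ((N ∩ G.neighborFinset x) ∪ (Out ∩ G.neighborFinset x)).card + 1 :=
              Finset.card_insert_le _ _
          _ ≤ (N ∩ G.neighborFinset x).card + (Out ∩ G.neighborFinset x).card + 1 := by
              have := Finset.card_union_le (N ∩ G.neighborFinset x) (Out ∩ G.neighborFinset x)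
              omega
          _ ≤ 2 + (Out ∩ G.neighborFinset x).card := by
              have := hinN x hx; omega
      have hsumN : ∑ x ∈ N, G.degree x ≤ 2 * D + ∑ x ∈ N, (Out ∩ G.neighborFinset x).card := by
        calc ∑ x ∈ N, G.degree x ≤ ∑ x ∈ N, (2 + (Out ∩ G.neighborFinset x).card) :=
              Finset.sum_le_sum hdegx
          _ = 2 * D + ∑ x ∈ N, (Out ∩ G.neighborFinset x).card := by
              rw [Finset.sum_add_distrib, Finset.sum_const, smul_eq_mul, hND]; ring
      have hcross : ∑ x ∈ N, (Out ∩ G.neighborFinset x).card ≤ Out.card := by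
        rw [cross]
        calc ∑ y ∈ Out, (N ∩ G.neighborFinset y).card ≤ ∑ y ∈ Out, G.degree y := by
              refine Finset.sum_le_sum (fun y hy => ?_)
              rw [← G.card_neighborFinset_eq_degree y]
              exact Finset.card_le_card Finset.inter_subset_right
          _ ≤ ∑ y ∈ Out, 1 := Finset.sum_le_sum houtdeg
          _ = Out.card := by simp
      have hsumOut : ∑ y ∈ Out, G.degree y ≤ Out.card := by
        calc ∑ y ∈ Out, G.degree y ≤ ∑ y ∈ Out, 1 := Finset.sum_le_sum houtdeg
          _ = Out.card := by simp
      have htot : (∑ v, G.degree v) ≤ Out.card + D + (2*D + Out.card) := by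
        rw [← hsplit]
        have h0 : G.degree a = D := hD.symm
        linarith [hsumOut, hsumN, hcross]
      have hDm : D ≤ m - 1 := by have := G.degree_lt_card_verts a; omega
      have h6 : (6:ℤ) ≤ (n:ℤ) := by omega
      have hmz : (n:ℤ) ≤ (m:ℤ) := by omega
      have hoz : (Out.card:ℤ) + ((D:ℤ) + 1) = (m:ℤ) := by omega
      have hDz : (n:ℤ) - 1 ≤ (D:ℤ) := by omega
      rw [ell, if_neg (by omega)]
      by_cases hm5 : m = 2 * n - 5
      · rw [if_pos hm5]
        refine le_trans (Nat.add_le_add_right htot _) ?_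
        have hm5z : (m:ℤ) = 2*(n:ℤ) - 5 := by omega
        zify [show 4 ≤ n by omega, show 2 ≤ n by omega]
        nlinarith [mul_nonneg (show (0:ℤ) ≤ (n:ℤ)-4 by linarith)
          (show (0:ℤ) ≤ (n:ℤ)-5 by linarith)]
      · rw [if_neg hm5]
        refine le_trans (Nat.add_le_add_right htot _) ?_
        zify [show 2 ≤ n by omega]
        nlinarith [mul_nonneg (show (0:ℤ) ≤ (n:ℤ)-6 by linarith)
          (show (0:ℤ) ≤ (m:ℤ) by positivity)]
    · by_cases hD2 : n - 2 ≤ D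
      · -- MID case : D = n - 2
        have hDeq : D = n - 2 := by omega
        set N := G.neighborFinset a with hNdef
        have haN : a ∉ N := by simp [hNdef]
        set Out := (univ : Finset V) \ insert a N with hOutdef
        have hND : N.card = D := G.card_neighborFinset_eq_degree a
        have hmemOut : ∀ y, y ∈ Out ↔ (y ≠ a ∧ ¬ G.Adj a y) := by
          intro y; simp [hOutdef, hNdef]
        have hsplit : ∑ y ∈ Out, G.degree y + (G.degree a + ∑ x ∈ N, G.degree x)
            = ∑ v, G.degree v := by
          have h := Finset.sum_sdiff (f := fun v => G.degree v)
            (Finset.subset_univ (insert a N))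
          rwa [Finset.sum_insert haN] at h
        have hcardOut : Out.card + (D + 1) = m := by
          have h1 : (insert a N).card = D + 1 := by rw [Finset.card_insert_of_notMem haN, hND]
          have h2 : Out.card = m - (D+1) := by
            rw [hOutdef, Finset.card_sdiff_of_subset (Finset.subset_univ _), h1, Finset.card_univ, ← hm]
          have h3 : (insert a N).card ≤ m := by
            rw [hm, ← Finset.card_univ]; exact Finset.card_le_card (Finset.subset_univ _)
          omega
        have hCL := closureA hn G hfree hconn (show n - 2 ≤ G.degree a by omega)
        have houtdeg : ∀ y ∈ Out, G.degree y ≤ 1 := by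
          intro y hy
          obtain ⟨hya, hyn⟩ := (hmemOut y).mp hy
          rcases hCL y with rfl | h | ⟨x, hax, hxy⟩
          · exact absurd rfl hya
          · exact absurd h hyn
          · have hallN : ∀ w, G.Adj y w → G.Adj a w := by
              intro w hw
              by_contra hwn'
              have hwa : w ≠ a := by rintro rfl; exact hyn hw.symm
              have hwx : w ≠ x := by rintro rfl; exact hwn' hax
              have h := keyA hn G hfree (show n - 2 ≤ G.degree a by omega) hax hxy hw
                (Ne.symm hya) (fun h => hwa h.symm) (fun h => hwx h.symm)
              exact hyn h.1
            show (G.neighborFinset y).card ≤ 1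
            refine Finset.card_le_one.mpr (fun w1 hw1 w2 hw2 => ?_)
            by_contra hne
            have haw1 : G.Adj y w1 := (G.mem_neighborFinset y w1).mp hw1
            have haw2 : G.Adj y w2 := (G.mem_neighborFinset y w2).mp hw2
            have h := keyA hn G hfree (show n - 2 ≤ G.degree a by omega)
              (hallN w1 haw1) haw1.symm haw2
              (Ne.symm hya) (hallN w2 haw2).ne hne
            exact hyn h.1
        have hOutne : Out.Nonempty := Finset.card_pos.mp (by omega)
        obtain ⟨y0, hy0⟩ := hOutne
        obtain ⟨hy0a, hy0n⟩ := (hmemOut y0).mp hy0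
        obtain ⟨x0, hax0, hx0y0⟩ : ∃ x, G.Adj a x ∧ G.Adj x y0 := by
          rcases hCL y0 with rfl | h | h
          · exact absurd rfl hy0a
          · exact absurd h hy0n
          · exact h
        have hc2 : ∀ x ∈ N, (N ∩ G.neighborFinset x).card ≤ n - 4 := by
          intro x hx
          by_contra hcon
          push_neg at hcon
          have haxx : G.Adj a x := (G.mem_neighborFinset a x).mp hx
          have hnoOut : ∀ y ∈ Out, ¬ G.Adj x y := by
            intro y hy hxy
            obtain ⟨w, hw⟩ : (N ∩ G.neighborFinset x).Nonempty :=
              Finset.card_pos.mp (by omega)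
            obtain ⟨hwN, hwx⟩ := Finset.mem_inter.mp hw
            obtain ⟨hya, hyn⟩ := (hmemOut y).mp hy
            have h := keyA hn G hfree (show n - 2 ≤ G.degree a by omega)
              ((G.mem_neighborFinset a w).mp hwN)
              ((G.mem_neighborFinset x w).mp hwx).symm hxy
              haxx.ne (Ne.symm hya)
              (fun h => hyn (h ▸ ((G.mem_neighborFinset a w).mp hwN)))
            exact hyn h.2
          have hdegxbig : n - 2 ≤ G.degree x := by
            have hsub : insert a (N ∩ G.neighborFinset x) ⊆ G.neighborFinset x := by
              intro w hw
              rcases Finset.mem_insert.mp hw with rfl | hw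
              · exact (G.mem_neighborFinset x w).mpr haxx.symm
              · exact Finset.mem_of_mem_inter_right hw
            have hanotin : a ∉ N ∩ G.neighborFinset x := fun h =>
              haN (Finset.mem_of_mem_inter_left h)
            have := Finset.card_le_card hsub
            rw [Finset.card_insert_of_notMem hanotin, G.card_neighborFinset_eq_degree] at this
            omega
          have hxx0 : x ≠ x0 := by
            rintro rfl
            exact hnoOut y0 hy0 hx0y0
          have h := keyA hn G hfree hdegxbig haxx.symm hax0 hx0y0
            hxx0 (fun h => hy0n (h ▸ haxx)) (fun h => hy0a h.symm)
          have h1 : x0 ∈ G.neighborFinset y0 := (G.mem_neighborFinset y0 x0).mpr hx0y0.symm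
          have h2 : x ∈ G.neighborFinset y0 := (G.mem_neighborFinset y0 x).mpr h.2.symm
          have hcard := houtdeg y0 hy0
          rw [← G.card_neighborFinset_eq_degree] at hcard
          have := Finset.card_le_one.mp hcard x h2 x0 h1
          exact hxx0 this
        have hdegx : ∀ x ∈ N, G.degree x ≤ (n - 3) + (Out ∩ G.neighborFinset x).card := by
          intro x hx
          have hsub : G.neighborFinset x ⊆
              insert a ((N ∩ G.neighborFinset x) ∪ (Out ∩ G.neighborFinset x)) := by
            intro w hw
            by_cases hwa : w = a
            · simp [hwa]
            · by_cases hwN : w ∈ N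
              · simp [Finset.mem_insert, Finset.mem_union, Finset.mem_inter, hwN, hw]
              · have hwOut : w ∈ Out := by
                  rw [hmemOut]
                  exact ⟨hwa, fun h => hwN ((G.mem_neighborFinset a w).mpr h)⟩
                simp [Finset.mem_insert, Finset.mem_union, Finset.mem_inter, hwOut, hw]
          calc G.degree x = (G.neighborFinset x).card := (G.card_neighborFinset_eq_degree x).symm
            _ ≤ (insert a ((N ∩ G.neighborFinset x) ∪ (Out ∩ G.neighborFinset x))).card :=
                Finset.card_le_card hsub
            _ ≤ ((N ∩ G.neighborFinset x) ∪ (Out ∩ G.neighborFinset x)).card + 1 :=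
                Finset.card_insert_le _ _
            _ ≤ (N ∩ G.neighborFinset x).card + (Out ∩ G.neighborFinset x).card + 1 := by
                have := Finset.card_union_le (N ∩ G.neighborFinset x) (Out ∩ G.neighborFinset x)
                omega
            _ ≤ (n - 3) + (Out ∩ G.neighborFinset x).card := by
                have := hc2 x hx; omega
        have hsumN : ∑ x ∈ N, G.degree x
            ≤ (n-3) * (n-2) + ∑ x ∈ N, (Out ∩ G.neighborFinset x).card := by
          calc ∑ x ∈ N, G.degree x ≤ ∑ x ∈ N, ((n-3) + (Out ∩ G.neighborFinset x).card) :=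
                Finset.sum_le_sum hdegx
            _ = (n-3) * (n-2) + ∑ x ∈ N, (Out ∩ G.neighborFinset x).card := by
                rw [Finset.sum_add_distrib, Finset.sum_const, smul_eq_mul, hND, hDeq]; ring
        have hcross : ∑ x ∈ N, (Out ∩ G.neighborFinset x).card ≤ Out.card := by
          rw [cross]
          calc ∑ y ∈ Out, (N ∩ G.neighborFinset y).card ≤ ∑ y ∈ Out, G.degree y := by
                refine Finset.sum_le_sum (fun y hy => ?_)
                rw [← G.card_neighborFinset_eq_degree y]
                exact Finset.card_le_card Finset.inter_subset_right
            _ ≤ ∑ y ∈ Out, 1 := Finset.sum_le_sum houtdeg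
            _ = Out.card := by simp
        have hsumOut : ∑ y ∈ Out, G.degree y ≤ Out.card := by
          calc ∑ y ∈ Out, G.degree y ≤ ∑ y ∈ Out, 1 := Finset.sum_le_sum houtdeg
            _ = Out.card := by simp
        have htot : (∑ v, G.degree v) ≤ Out.card + (n-2) + ((n-3)*(n-2) + Out.card) := by
          rw [← hsplit]
          have h0 : G.degree a = n - 2 := by omega
          linarith [hsumOut, hsumN, hcross]
        have h6 : (6:ℤ) ≤ (n:ℤ) := by omega
        have hmz : (n:ℤ) ≤ (m:ℤ) := by omega
        have hoz : (Out.card:ℤ) + ((n:ℤ) - 1) = (m:ℤ) := by omega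
        rw [ell, if_neg (by omega)]
        by_cases hm5 : m = 2 * n - 5
        · rw [if_pos hm5]
          refine le_trans (Nat.add_le_add_right htot _) ?_
          have hm5z : (m:ℤ) = 2*(n:ℤ) - 5 := by omega
          zify [show 4 ≤ n by omega, show 3 ≤ n by omega, show 2 ≤ n by omega]
          nlinarith [sq_nonneg ((n:ℤ) - 5)]
        · rw [if_neg hm5]
          refine le_trans (Nat.add_le_add_right htot _) ?_
          zify [show 3 ≤ n by omega, show 2 ≤ n by omega]
          nlinarith [mul_nonneg (show (0:ℤ) ≤ (n:ℤ)-5 by linarith)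
            (show (0:ℤ) ≤ (m:ℤ)-(n:ℤ) by linarith)]
      · -- LOW cases : all degrees ≤ n-3
        have hD3 : D ≤ n - 3 := by omega
        have h6 : (6:ℤ) ≤ (n:ℤ) := by omega
        have hmz : (n:ℤ) ≤ (m:ℤ) := by omega
        by_cases hm5 : m = 2 * n - 5
        · by_cases hQ : ∃ v : V, G.degree v = n - 3
          · obtain ⟨v, hv⟩ := hQ
            set B := G.neighborFinset v with hBdef
            have hBcard : B.card = n - 3 := by rw [hBdef, G.card_neighborFinset_eq_degree, hv]
            set R := (univ : Finset V) \ B with hRdef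
            have hsplit : ∑ y ∈ R, G.degree y + ∑ x ∈ B, G.degree x = ∑ u, G.degree u := by
              have h := Finset.sum_sdiff (f := fun v => G.degree v) (Finset.subset_univ B)
              exact h
            have hCLQ := closureQ hn G hfree hconn hv
            have hRsub : ∀ y ∈ R, G.neighborFinset y ⊆ B := by
              intro y hy
              have hyB : y ∉ B := (Finset.mem_sdiff.mp hy).2
              rcases hCLQ y with rfl | h | h
              · intro w hw; exact hw
              · exact absurd ((G.mem_neighborFinset v y).mpr h) hyB
              · intro w hw
                exact (G.mem_neighborFinset v w).mpr (h w ((G.mem_neighborFinset y w).mp hw))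
            have hsumB : ∑ x ∈ B, G.degree x ≤ (n-3) * (n-3) := by
              calc ∑ x ∈ B, G.degree x ≤ ∑ x ∈ B, (n-3) :=
                    Finset.sum_le_sum (fun x _ => by have := hmax' x; omega)
                _ = (n-3) * (n-3) := by rw [Finset.sum_const, smul_eq_mul, hBcard]
            have hsumR : ∑ y ∈ R, G.degree y ≤ (n-3) * (n-3) := by
              have h1 : ∀ y ∈ R, G.degree y = (B ∩ G.neighborFinset y).card := by
                intro y hy
                rw [← G.card_neighborFinset_eq_degree y]
                congr 1
                exact (Finset.inter_eq_right.mpr (hRsub y hy)).symm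
              calc ∑ y ∈ R, G.degree y = ∑ y ∈ R, (B ∩ G.neighborFinset y).card :=
                    Finset.sum_congr rfl h1
                _ = ∑ x ∈ B, (R ∩ G.neighborFinset x).card := (cross G R B)
                _ ≤ ∑ x ∈ B, G.degree x := by
                    refine Finset.sum_le_sum (fun x _ => ?_)
                    rw [← G.card_neighborFinset_eq_degree x]
                    exact Finset.card_le_card Finset.inter_subset_right
                _ ≤ (n-3) * (n-3) := hsumB
            have htot : (∑ u, G.degree u) ≤ (n-3)*(n-3) + (n-3)*(n-3) := by
              rw [← hsplit]; exact Nat.add_le_add hsumR hsumB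
            rw [ell, if_neg (by omega), if_pos hm5]
            refine le_trans (Nat.add_le_add_right htot _) ?_
            have hm5z : (m:ℤ) = 2*(n:ℤ) - 5 := by omega
            zify [show 4 ≤ n by omega, show 3 ≤ n by omega, show 2 ≤ n by omega]
            nlinarith []
          · push_neg at hQ
            have hdle : ∀ v : V, G.degree v ≤ n - 4 := by
              intro v; have h1 := hmax' v; have h2 := hQ v; omega
            have htot : (∑ v, G.degree v) ≤ m * (n-4) := by
              calc (∑ v, G.degree v) ≤ (univ : Finset V).card • (n-4) :=
                    Finset.sum_le_card_nsmul _ _ _ (fun x _ => hdle x)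
                _ = m * (n-4) := by rw [smul_eq_mul, Finset.card_univ]
            rw [ell, if_neg (by omega), if_pos hm5]
            refine le_trans (Nat.add_le_add_right htot _) ?_
            have hm5z : (m:ℤ) = 2*(n:ℤ) - 5 := by omega
            zify [show 4 ≤ n by omega, show 2 ≤ n by omega]
            nlinarith []
        · have hdle : ∀ v : V, G.degree v ≤ n - 3 := fun v => by have := hmax' v; omega
          have htot : (∑ v, G.degree v) ≤ m * (n-3) := by
            calc (∑ v, G.degree v) ≤ (univ : Finset V).card • (n-3) :=
                  Finset.sum_le_card_nsmul _ _ _ (fun x _ => hdle x)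
              _ = m * (n-3) := by rw [smul_eq_mul, Finset.card_univ]
          rw [ell, if_neg (by omega), if_neg hm5]
          refine le_trans (Nat.add_le_add_right htot _) ?_
          zify [show 3 ≤ n by omega, show 2 ≤ n by omega]
          nlinarith []

lemma copy_induce {V : Type} (G : SimpleGraph V) (S : Set V) {W : Type*} (H : SimpleGraph W)
    (h : ContainsCopy (G.induce S) H) : ContainsCopy G H := by
  obtain ⟨f, hf⟩ := h
  refine ⟨⟨fun w => (f w).val, fun w1 w2 h => f.injective (Subtype.ext h)⟩, ?_⟩
  intro a b hab
  exact hf a b hab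

lemma degree_induce {V : Type} [Fintype V] [DecidableEq V] (G : SimpleGraph V)
    [DecidableRel G.Adj] (S : Set V) [DecidablePred (· ∈ S)] {u : V} (hu : u ∈ S)
    (hcl : ∀ w, G.Adj u w → w ∈ S) :
    (G.induce S).degree ⟨u, hu⟩ = G.degree u := by
  rw [← SimpleGraph.card_neighborFinset_eq_degree, ← SimpleGraph.card_neighborFinset_eq_degree]
  apply Finset.card_bij
    (fun (w : ↥S) (_ : w ∈ (G.induce S).neighborFinset ⟨u, hu⟩) => (w : V))
  · intro w hw
    rw [SimpleGraph.mem_neighborFinset] at hw ⊢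
    exact hw
  · intro w1 h1 w2 h2 h
    exact Subtype.ext h
  · intro w hw
    rw [SimpleGraph.mem_neighborFinset] at hw
    refine ⟨⟨w, hcl w hw⟩, ?_, rfl⟩
    rw [SimpleGraph.mem_neighborFinset]
    exact hw

lemma walk_induce {V : Type} (G : SimpleGraph V) (S : Set V)
    (hcl : ∀ u w, u ∈ S → G.Adj u w → w ∈ S) :
    ∀ {a b : V} (w : G.Walk a b) (ha : a ∈ S),
      ∃ hb : b ∈ S, (G.induce S).Reachable ⟨a, ha⟩ ⟨b, hb⟩ := by
  intro a b w
  induction w with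
  | nil => intro ha; exact ⟨ha, Reachable.refl _⟩
  | @cons u x b h p ih =>
    intro ha
    have hx : x ∈ S := hcl _ _ ha h
    obtain ⟨hb, hr⟩ := ih hx
    refine ⟨hb, Reachable.trans (Adj.reachable ?_) hr⟩
    simp only [SimpleGraph.comap_adj, Function.Embedding.coe_subtype]
    exact h

lemma main_glue (hn : 6 ≤ n) : ∀ (p : ℕ) (V : Type) [Fintype V] [DecidableEq V]
    (G : SimpleGraph V) [DecidableRel G.Adj], Fintype.card V = p →
    ¬ ContainsCopy G (TnStar n) →
    ∃ M : Multiset ℕ, M.sum = p ∧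
      (∑ v, G.degree v) + (M.map (ell n)).sum ≤ (n - 2) * p := by
  intro p
  induction p using Nat.strong_induction_on with
  | _ p IH =>
    intro V _ _ G _ hcard hfree
    rcases Nat.eq_zero_or_pos p with rfl | hp
    · haveI : IsEmpty V := Fintype.card_eq_zero_iff.mp hcard
      exact ⟨0, by simp, by simp [Finset.univ_eq_empty]⟩
    haveI hne : Nonempty V := Fintype.card_pos_iff.mp (by omega)
    obtain ⟨v⟩ := hne
    classical
    set S : Set V := {u | G.Reachable v u} with hSdef
    have hvS : v ∈ S := Reachable.refl v
    have hScl : ∀ u w, u ∈ S → G.Adj u w → w ∈ S := fun u w hu h => hu.trans h.reachable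
    have hScl2 : ∀ u w, u ∈ Sᶜ → G.Adj u w → w ∈ Sᶜ := by
      intro u w hu h hw
      exact hu (Set.mem_setOf.mpr ((hw : G.Reachable v w).trans h.symm.reachable))
    by_cases hT : ∀ u, u ∈ S
    · have hconn : G.Connected := by
        rw [connected_iff]
        refine ⟨fun a b => ?_, ⟨v⟩⟩
        exact ((hT a : G.Reachable v a)).symm.trans (hT b)
      refine ⟨{p}, by simp, ?_⟩
      have h := ubconn hn G hconn hfree
      rw [hcard] at h
      simpa using h
    · push_neg at hT
      obtain ⟨u0, hu0⟩ := hT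
      set m1 := Fintype.card ↥S with hm1
      set m2 := Fintype.card ↥(Sᶜ) with hm2
      have hm1pos : 0 < m1 := Fintype.card_pos_iff.mpr ⟨⟨v, hvS⟩⟩
      have hm2pos : 0 < m2 := Fintype.card_pos_iff.mpr ⟨⟨u0, hu0⟩⟩
      have hm12 : m1 + m2 = p := by
        have h1 : Fintype.card ↥(Sᶜ) = Fintype.card V - Fintype.card ↥S := by
          rw [← Set.toFinset_card, ← Set.toFinset_card, Set.toFinset_compl, Finset.card_compl]
        have h2 : Fintype.card ↥S ≤ Fintype.card V := by
          rw [← Set.toFinset_card, ← Finset.card_univ]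
          exact Finset.card_le_card (Finset.subset_univ _)
        rw [hm1, hm2, ← hcard]
        omega
      -- the two induced graphs
      have hfree1 : ¬ ContainsCopy (G.induce S) (TnStar n) :=
        fun h => hfree (copy_induce G S _ h)
      have hfree2 : ¬ ContainsCopy (G.induce (Sᶜ)) (TnStar n) :=
        fun h => hfree (copy_induce G (Sᶜ) _ h)
      have hconn1 : (G.induce S).Connected := by
        rw [connected_iff]
        refine ⟨?_, ⟨⟨v, hvS⟩⟩⟩
        rintro ⟨a, ha⟩ ⟨b, hb⟩
        obtain ⟨wab⟩ : G.Reachable a b := ((ha : G.Reachable v a)).symm.trans hb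
        obtain ⟨hb', hr⟩ := walk_induce G S hScl wab ha
        convert hr
      obtain ⟨M2, hM2sum, hM2⟩ := IH m2 (by omega) ↥(Sᶜ) (G.induce (Sᶜ)) rfl hfree2
      have hub1 := ubconn hn (G.induce S) hconn1 hfree1
      -- degree sums
      have hdegsum : (∑ w, G.degree w)
          = (∑ x : ↥S, (G.induce S).degree x) + (∑ x : ↥(Sᶜ), (G.induce (Sᶜ)).degree x) := by
        have h1 : ∀ x : ↥S, (G.induce S).degree x = G.degree x.val := by
          rintro ⟨x, hx⟩
          exact degree_induce G S hx (fun w h => hScl _ _ hx h)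
        have h2 : ∀ x : ↥(Sᶜ), (G.induce (Sᶜ)).degree x = G.degree x.val := by
          rintro ⟨x, hx⟩
          exact degree_induce G (Sᶜ) hx (fun w h => hScl2 _ _ hx h)
        rw [Finset.sum_congr rfl (fun x _ => h1 x), Finset.sum_congr rfl (fun x _ => h2 x)]
        rw [← Finset.sum_subtype (Set.toFinset S) (fun x => by simp) (fun w => G.degree w),
          ← Finset.sum_subtype (Set.toFinset (Sᶜ)) (fun x => by simp) (fun w => G.degree w)]
        rw [show Set.toFinset (Sᶜ) = (Set.toFinset S)ᶜ by ext x; simp]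
        exact (Finset.sum_add_sum_compl (Set.toFinset S) _).symm
      refine ⟨m1 ::ₘ M2, by simp [hM2sum]; omega, ?_⟩
      have hmul : (n-2) * m1 + (n-2) * m2 = (n-2) * p := by rw [← Nat.mul_add, hm12]
      rw [hdegsum]
      simp only [Multiset.map_cons, Multiset.sum_cons]
      linarith [hub1, hM2]


end KeyLemma

section Numeric
variable {n : ℕ}

lemma rho_subadd (d : ℕ) (hd : 0 < d) (x y : ℕ) :
    ((x + y) % d) * (d - (x + y) % d) ≤ (x % d) * (d - x % d) + (y % d) * (d - y % d) := by
  have hax : x % d < d := Nat.mod_lt _ hd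
  have hby : y % d < d := Nat.mod_lt _ hd
  set a := x % d with ha
  set b := y % d with hb
  have hm : (x + y) % d = (a + b) % d := by rw [Nat.add_mod]
  rw [hm]
  rcases lt_or_ge (a + b) d with h | h
  · rw [Nat.mod_eq_of_lt h]
    zify [le_of_lt hax, le_of_lt hby, le_of_lt h]
    nlinarith [mul_nonneg (Int.natCast_nonneg a) (Int.natCast_nonneg b)]
  · have h2 : (a + b) % d = a + b - d := by
      rw [Nat.mod_eq_sub_mod h, Nat.mod_eq_of_lt (by omega)]
    rw [h2]
    zify [h, le_of_lt hax, le_of_lt hby, show a + b - d ≤ d by omega]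
    nlinarith [mul_nonneg (show (0:ℤ) ≤ (d:ℤ) - (a:ℤ) by omega)
      (show (0:ℤ) ≤ (d:ℤ) - (b:ℤ) by omega)]

lemma ell_ge (hn : 6 ≤ n) (m : ℕ) (hm : ¬(n ≤ m ∧ m ≠ 2 * n - 5)) :
    (m % (n - 1)) * ((n - 1) - m % (n - 1)) ≤ ell n m := by
  push_neg at hm
  rw [ell]
  by_cases h1 : m ≤ n - 1
  · rw [if_pos h1]
    rcases Nat.lt_or_ge m (n - 1) with h | h
    · rw [Nat.mod_eq_of_lt h]
    · have hm' : m = n - 1 := by omega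
      rw [hm', Nat.mod_self]
      simp
  · rw [if_neg h1]
    have hm5 : m = 2 * n - 5 := hm (by omega)
    rw [if_pos hm5, hm5]
    have h2 : (2 * n - 5) % (n - 1) = n - 4 := by
      have h3 : 2 * n - 5 = (n - 1) + (n - 4) := by omega
      rw [h3, Nat.add_mod_left, Nat.mod_eq_of_lt (by omega)]
    rw [h2]
    have h3 : (n - 1) - (n - 4) = 3 := by omega
    rw [h3]
    omega

lemma sum13 (hn : 6 ≤ n) (M : Multiset ℕ) (hM : ∀ m ∈ M, ¬(n ≤ m ∧ m ≠ 2 * n - 5)) :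
    (M.sum % (n - 1)) * ((n - 1) - M.sum % (n - 1)) ≤ (M.map (ell n)).sum := by
  induction M using Multiset.induction_on with
  | empty => simp
  | cons a T ih =>
    have ha := hM a (Multiset.mem_cons_self a T)
    have hT : ∀ m ∈ T, ¬(n ≤ m ∧ m ≠ 2 * n - 5) :=
      fun m hm => hM m (Multiset.mem_cons_of_mem hm)
    have h1 := rho_subadd (n - 1) (by omega) a T.sum
    have h2 := ell_ge hn a ha
    have h3 := ih hT
    simp only [Multiset.sum_cons, Multiset.map_cons]
    linarith

lemma m2struct (hn : 6 ≤ n) (M : Multiset ℕ) (hM : ∀ m ∈ M, n ≤ m ∧ m ≠ 2 * n - 5) :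
    M.sum = 0 ∨ (n ≤ M.sum ∧ M.sum ≠ 2 * n - 5) ∨ 2 * n ≤ M.sum := by
  induction M using Multiset.induction_on with
  | empty => left; simp
  | cons a T ih =>
    have ha := hM a (Multiset.mem_cons_self a T)
    rcases Multiset.empty_or_exists_mem T with rfl | ⟨b, hb⟩
    · right; left
      simpa using ha
    · have hb' := hM b (Multiset.mem_cons_of_mem hb)
      right; right
      have hble : b ≤ T.sum := Multiset.single_le_sum (fun x _ => Nat.zero_le x) b hb
      simp only [Multiset.sum_cons]
      omega

set_option maxHeartbeats 2000000 in
lemma arith (hn : 6 ≤ n) (r s2 y : ℕ) (hr : r ≤ n - 2)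
    (hrs : r = 0 ∨ r = n - 4 ∨ r = n - 3 ∨ r = n - 2)
    (hy : y ≤ n - 2)
    (hmod : (y + s2) % (n - 1) = r)
    (hs2 : s2 = 0 ∨ (n ≤ s2 ∧ s2 ≠ 2 * n - 5) ∨ 2 * n ≤ s2) :
    r * (n - 1 - r) ≤ s2 + y * (n - 1 - y) := by
  have hd : 0 < n - 1 := by omega
  -- case: s2 is very large
  have hbig : 3 * (n - 4) ≤ s2 → r * (n - 1 - r) ≤ s2 + y * (n - 1 - y) := by
    intro hs
    have : r * (n - 1 - r) ≤ 3 * (n - 4) := by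
      rcases hrs with rfl | rfl | rfl | rfl
      · simp
      · have e : n - 1 - (n - 4) = 3 := by omega
        rw [e]; omega
      · have e : n - 1 - (n - 3) = 2 := by omega
        rw [e]; omega
      · have e : n - 1 - (n - 2) = 1 := by omega
        rw [e]; omega
    calc r * (n - 1 - r) ≤ 3 * (n - 4) := this
      _ ≤ s2 := hs
      _ ≤ s2 + y * (n - 1 - y) := Nat.le_add_right _ _
  rcases hs2 with rfl | ⟨hs2n, hs2e⟩ | hs2n
  · -- s2 = 0
    rw [Nat.add_zero, Nat.mod_eq_of_lt (by omega)] at hmod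
    subst hmod
    omega
  · -- single component
    rcases le_or_gt (3 * (n - 4)) s2 with hs | hs
    · exact hbig hs
    rcases le_or_gt s2 (2 * n - 3) with hsB | hsC
    · -- case B : s2 = (n-1) + μ, 1 ≤ μ ≤ n - 2
      set μ := s2 - (n - 1) with hμ
      have hμ1 : 1 ≤ μ := by omega
      have hμ2 : μ ≤ n - 2 := by omega
      have hmod' : (y + μ) % (n - 1) = r := by
        have he : y + s2 = (y + μ) + (n - 1) := by omega
        rwa [he, Nat.add_mod_right] at hmod
      have hbr : y + μ = r ∨ y + μ = r + (n - 1) := by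
        rcases Nat.lt_or_ge (y + μ) (n - 1) with h | h
        · left; rwa [Nat.mod_eq_of_lt h] at hmod'
        · right
          have h2 : (y + μ) % (n - 1) = y + μ - (n - 1) := by
            rw [Nat.mod_eq_sub_mod h, Nat.mod_eq_of_lt (by omega)]
          omega
      rcases hrs with rfl | rfl | rfl | rfl
      · simp
      · -- r = n - 4
        have hy0 : y ≠ 0 := by
          intro h0
          rcases hbr with hb1 | hb2
          · apply hs2e; omega
          · omega
        rcases hbr with hb1 | hb2
        · -- y + μ = n - 4, so 1 ≤ y ≤ n - 5, s2 = 2n - 5 - y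
          have e : n - 1 - (n - 4) = 3 := by omega
          rw [e]
          obtain ⟨w, hw⟩ : ∃ w, n = y + w + 5 := ⟨n - 5 - y, by omega⟩
          have hz : n - 1 - y = w + 4 := by omega
          have h4 : n - 4 = y + w + 1 := by omega
          have hs2' : s2 = y + 2*w + 5 := by omega
          rw [hz, h4, hs2']
          nlinarith [Nat.le_mul_of_pos_left w (show 0 < y by omega)]
        · -- y + μ = n - 4 + n - 1 : y ∈ {n-3, n-2}
          have e : n - 1 - (n - 4) = 3 := by omega
          rw [e]
          have : y = n - 3 ∨ y = n - 2 := by omega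
          rcases this with rfl | rfl
          · have e2 : n - 1 - (n - 3) = 2 := by omega
            rw [e2]; omega
          · have e2 : n - 1 - (n - 2) = 1 := by omega
            rw [e2]; omega
      · -- r = n - 3
        have e : n - 1 - (n - 3) = 2 := by omega
        rw [e]
        rcases hbr with hb1 | hb2
        · -- y + μ = n - 3
          obtain ⟨w, hw⟩ : ∃ w, n = y + w + 4 := ⟨n - 4 - y, by omega⟩
          have hz : n - 1 - y = w + 3 := by omega
          have h4 : n - 3 = y + w + 1 := by omega
          have hs2' : s2 = y + 2*w + 4 := by omega
          rw [hz, h4, hs2']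
          nlinarith
        · -- y + μ = 2n - 4 : y = n - 2, μ = n - 2
          have hyv : y = n - 2 := by omega
          subst hyv
          have e2 : n - 1 - (n - 2) = 1 := by omega
          rw [e2]; omega
      · -- r = n - 2 : trivial since s2 ≥ n
        have e : n - 1 - (n - 2) = 1 := by omega
        rw [e]
        omega
    · -- case C : 2n - 2 ≤ s2 ≤ 3n - 13
      set σ := s2 - (2 * n - 2) with hσ
      have hσ2 : σ ≤ n - 11 := by omega
      have hmod' : (y + σ) % (n - 1) = r := by
        have he : y + s2 = ((y + σ) + (n - 1)) + (n - 1) := by omega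
        rwa [he, Nat.add_mod_right, Nat.add_mod_right] at hmod
      have hbr : y + σ = r ∨ y + σ = r + (n - 1) := by
        rcases Nat.lt_or_ge (y + σ) (n - 1) with h | h
        · left; rwa [Nat.mod_eq_of_lt h] at hmod'
        · right
          have h2 : (y + σ) % (n - 1) = y + σ - (n - 1) := by
            rw [Nat.mod_eq_sub_mod h, Nat.mod_eq_of_lt (by omega)]
          omega
      rcases hrs with rfl | rfl | rfl | rfl
      · simp
      · have e : n - 1 - (n - 4) = 3 := by omega
        rw [e]
        rcases hbr with hb1 | hb2
        · -- y = n - 4 - σ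
          have hnn : n = y + σ + 4 := by omega
          have hz : n - 1 - y = σ + 3 := by omega
          have h4 : n - 4 = y + σ := by omega
          have hs2' : s2 = 2*y + 3*σ + 6 := by omega
          rw [hz, h4, hs2']
          nlinarith
        · omega
      · have e : n - 1 - (n - 3) = 2 := by omega
        rw [e]
        have h0 : 0 ≤ y * (n - 1 - y) := Nat.zero_le _
        omega
      · have e : n - 1 - (n - 2) = 1 := by omega
        rw [e]
        omega
  · -- two or more components
    rcases le_or_gt (3 * (n - 4)) s2 with hs | hs
    · exact hbig hs
    · -- 2n ≤ s2 < 3n - 12 : same as case C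
      set σ := s2 - (2 * n - 2) with hσ
      have hσ2 : σ ≤ n - 11 := by omega
      have hmod' : (y + σ) % (n - 1) = r := by
        have he : y + s2 = ((y + σ) + (n - 1)) + (n - 1) := by omega
        rwa [he, Nat.add_mod_right, Nat.add_mod_right] at hmod
      have hbr : y + σ = r ∨ y + σ = r + (n - 1) := by
        rcases Nat.lt_or_ge (y + σ) (n - 1) with h | h
        · left; rwa [Nat.mod_eq_of_lt h] at hmod'
        · right
          have h2 : (y + σ) % (n - 1) = y + σ - (n - 1) := by
            rw [Nat.mod_eq_sub_mod h, Nat.mod_eq_of_lt (by omega)]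
          omega
      rcases hrs with rfl | rfl | rfl | rfl
      · simp
      · have e : n - 1 - (n - 4) = 3 := by omega
        rw [e]
        rcases hbr with hb1 | hb2
        · have hnn : n = y + σ + 4 := by omega
          have hz : n - 1 - y = σ + 3 := by omega
          have h4 : n - 4 = y + σ := by omega
          have hs2' : s2 = 2*y + 3*σ + 6 := by omega
          rw [hz, h4, hs2']
          nlinarith
        · omega
      · have e : n - 1 - (n - 3) = 2 := by omega
        rw [e]
        omega
      · have e : n - 1 - (n - 2) = 1 := by omega
        rw [e]
        omega

lemma NL (hn : 6 ≤ n) (r : ℕ) (hr : r ≤ n - 2)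
    (hrs : r = 0 ∨ r = n - 4 ∨ r = n - 3 ∨ r = n - 2) (M : Multiset ℕ)
    (hmod : M.sum % (n - 1) = r) :
    r * (n - 1 - r) ≤ (M.map (ell n)).sum := by
  classical
  set p2 : ℕ → Prop := fun m => n ≤ m ∧ m ≠ 2 * n - 5 with hp2
  set M2 := M.filter p2 with hM2
  set M1 := M.filter (fun m => ¬ p2 m) with hM1
  have hsplit : M2 + M1 = M := Multiset.filter_add_not p2 M
  have hsum_split : M2.sum + M1.sum = M.sum := by rw [← Multiset.sum_add, hsplit]
  have hmap_split : (M2.map (ell n)).sum + (M1.map (ell n)).sum = (M.map (ell n)).sum := by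
    rw [← Multiset.sum_add, ← Multiset.map_add, hsplit]
  have h13 : (M1.sum % (n - 1)) * ((n - 1) - M1.sum % (n - 1)) ≤ (M1.map (ell n)).sum := by
    refine sum13 hn M1 (fun m hm => ?_)
    exact (Multiset.mem_filter.mp hm).2
  have hT2 : ∀ m ∈ M2, n ≤ m ∧ m ≠ 2 * n - 5 := fun m hm => (Multiset.mem_filter.mp hm).2
  have hM2e : (M2.map (ell n)).sum = M2.sum := by
    have : M2.map (ell n) = M2.map id := by
      refine Multiset.map_congr rfl (fun m hm => ?_)
      have h := hT2 m hm
      rw [ell, if_neg (by omega), if_neg h.2]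
      rfl
    rw [this, Multiset.map_id]
  have hstruct := m2struct hn M2 hT2
  set y := M1.sum % (n - 1) with hy'
  have hy : y ≤ n - 2 := by
    have := Nat.mod_lt M1.sum (show 0 < n - 1 by omega)
    omega
  have hmod' : (y + M2.sum) % (n - 1) = r := by
    rw [hy', Nat.mod_add_mod, Nat.add_comm, hsum_split]
    exact hmod
  have harith := arith hn r M2.sum y hr hrs hy hmod' hstruct
  calc r * (n - 1 - r) ≤ M2.sum + y * (n - 1 - y) := harith
    _ ≤ (M2.map (ell n)).sum + (M1.map (ell n)).sum := by
        rw [hM2e]; exact Nat.add_le_add_left h13 _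
    _ = (M.map (ell n)).sum := hmap_split


end Numeric

section Construction
variable {n : ℕ}

/-- disjoint cliques graph: blocks of `d` consecutive vertices. -/
def cliqueGraph (p d : ℕ) : SimpleGraph (Fin p) :=
  SimpleGraph.fromRel (fun x y => x.val / d = y.val / d)

lemma cg_adj {p d : ℕ} (x y : Fin p) :
    (cliqueGraph p d).Adj x y ↔ x ≠ y ∧ x.val / d = y.val / d := by
  rw [cliqueGraph, SimpleGraph.fromRel_adj]
  constructor
  · rintro ⟨h1, h2 | h2⟩
    · exact ⟨h1, h2⟩
    · exact ⟨h1, h2.symm⟩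
  · rintro ⟨h1, h2⟩
    exact ⟨h1, Or.inl h2⟩

instance {p d : ℕ} : DecidableRel (cliqueGraph p d).Adj := fun x y =>
  decidable_of_iff' _ (cg_adj x y)

lemma cg_free (hn : 6 ≤ n) (p : ℕ) : ¬ ContainsCopy (cliqueGraph p (n-1)) (TnStar n) := by
  rintro ⟨f, hf⟩
  set d := n - 1 with hd
  have hadj : ∀ x y : Fin n, (TnStar n).Adj x y → (f x).val / d = (f y).val / d :=
    fun x y h => ((cg_adj _ _).mp (hf x y h)).2
  have hne : ∀ (a b : ℕ) (ha : a < n) (hb : b < n), a ≠ b →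
      (⟨a, ha⟩ : Fin n) ≠ ⟨b, hb⟩ := by
    intro a b ha hb h he
    exact h (by simpa using congrArg Fin.val he)
  have hadj0 : ∀ (j : ℕ) (hj : j < n), 1 ≤ j → j ≤ n - 3 →
      (TnStar n).Adj ⟨0, by omega⟩ ⟨j, hj⟩ := by
    intro j hj h1 h2
    exact ⟨hne 0 j (by omega) hj (by omega), Or.inl (Or.inl ⟨rfl, h1, h2⟩)⟩
  have hadjA : (TnStar n).Adj ⟨n-3, by omega⟩ ⟨n-2, by omega⟩ :=
    ⟨hne (n-3) (n-2) (by omega) (by omega) (by omega), Or.inl (Or.inr (Or.inl ⟨rfl, rfl⟩))⟩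
  have hadjB : (TnStar n).Adj ⟨n-2, by omega⟩ ⟨n-1, by omega⟩ :=
    ⟨hne (n-2) (n-1) (by omega) (by omega) (by omega), Or.inl (Or.inr (Or.inr ⟨rfl, rfl⟩))⟩
  have hblock : ∀ i : Fin n, (f i).val / d = (f ⟨0, by omega⟩).val / d := by
    intro i
    have hreg : i.val = 0 ∨ (1 ≤ i.val ∧ i.val ≤ n - 3) ∨ i.val = n - 2 ∨ i.val = n - 1 := by
      have := i.isLt; omega
    have hi3 : (f ⟨n-3, by omega⟩).val / d = (f ⟨0, by omega⟩).val / d :=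
      (hadj _ _ (hadj0 (n-3) (by omega) (by omega) (by omega))).symm
    have hi2 : (f ⟨n-2, by omega⟩).val / d = (f ⟨0, by omega⟩).val / d :=
      ((hadj _ _ hadjA).symm).trans hi3
    rcases hreg with h | ⟨h1, h2⟩ | h | h
    · have : i = ⟨0, by omega⟩ := Fin.ext h
      rw [this]
    · have : i = ⟨i.val, i.isLt⟩ := Fin.ext rfl
      rw [this]
      exact (hadj _ _ (hadj0 i.val i.isLt h1 h2)).symm
    · have : i = ⟨n-2, by omega⟩ := Fin.ext h
      rw [this]
      exact hi2
    · have : i = ⟨n-1, by omega⟩ := Fin.ext h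
      rw [this]
      exact ((hadj _ _ hadjB).symm).trans hi2
  set g : Fin n → Fin (n-1) := fun i => ⟨(f i).val % d, Nat.mod_lt _ (by omega)⟩ with hg
  have hginj : Function.Injective g := by
    intro i j hij
    have h1 : (f i).val % d = (f j).val % d := by simpa [hg] using congrArg Fin.val hij
    have h2 : (f i).val / d = (f j).val / d := (hblock i).trans (hblock j).symm
    have h3 : (f i).val = (f j).val := by
      calc (f i).val = d * ((f i).val / d) + (f i).val % d := (Nat.div_add_mod _ d).symm
        _ = d * ((f j).val / d) + (f j).val % d := by rw [h1, h2]
        _ = (f j).val := Nat.div_add_mod _ d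
    exact f.injective (Fin.ext h3)
  have := Fintype.card_le_of_injective g hginj
  simp only [Fintype.card_fin] at this
  omega

lemma block_card (p d c : ℕ) (hd : 0 < d) :
    ((univ : Finset (Fin p)).filter (fun y => y.val / d = c)).card
      = min ((c+1)*d) p - c*d := by
  rw [show (c+1)*d ⊓ p - c*d = (Finset.Ico (c*d) ((c+1)*d ⊓ p)).card by rw [Nat.card_Ico]]
  apply Finset.card_bij (fun (y : Fin p) (_ : y ∈ (univ : Finset (Fin p)).filter
    (fun y => y.val / d = c)) => y.val)
  · intro y hy
    have h := (Finset.mem_filter.mp hy).2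
    have e1 := Nat.div_add_mod y.val d
    rw [h] at e1
    have e2 : y.val % d < d := Nat.mod_lt _ hd
    have e3 := y.isLt
    have hcd : c * d = d * c := Nat.mul_comm _ _
    have hc1 : (c+1)*d = c*d + d := by ring
    rw [Finset.mem_Ico]
    constructor
    · omega
    · rw [lt_min_iff]
      constructor
      · omega
      · exact e3
  · intro y1 h1 y2 h2 h
    exact Fin.ext h
  · intro z hz
    rw [Finset.mem_Ico, lt_min_iff] at hz
    obtain ⟨hz1, hz2, hz3⟩ := hz
    refine ⟨⟨z, hz3⟩, ?_, rfl⟩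
    rw [Finset.mem_filter]
    refine ⟨Finset.mem_univ _, ?_⟩
    show z / d = c
    have hcd : c * d = d * c := Nat.mul_comm _ _
    have hc1 : (c+1)*d = c*d + d := by ring
    have he : z = d * c + (z - d * c) := by omega
    rw [he, Nat.mul_add_div hd, Nat.div_eq_of_lt (by omega)]
    omega

lemma cg_degsum (hn : 6 ≤ n) (p k r : ℕ) (hr : r ≤ n - 2) (hpkr : p = k * (n-1) + r) :
    ∑ x : Fin p, (cliqueGraph p (n-1)).degree x = k * ((n-1)*(n-2)) + r * (r-1) := by
  set d := n - 1 with hd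
  have hd0 : 0 < d := by omega
  have hmaps : ∀ x : Fin p, x ∈ (univ : Finset (Fin p)) → x.val / d ∈ Finset.range (k+1) := by
    intro x _
    rw [Finset.mem_range]
    have := x.isLt
    rw [Nat.lt_succ_iff, Nat.div_le_iff_le_mul_add_pred hd0]
    have hcomm : d * k = k * d := Nat.mul_comm d k
    omega
  have hdeg : ∀ x : Fin p, (cliqueGraph p d).degree x
      = ((univ : Finset (Fin p)).filter (fun y => y.val / d = x.val / d)).card - 1 := by
    intro x
    rw [← SimpleGraph.card_neighborFinset_eq_degree]
    have he : (cliqueGraph p d).neighborFinset x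
        = ((univ : Finset (Fin p)).filter (fun y => y.val / d = x.val / d)).erase x := by
      ext y
      rw [SimpleGraph.mem_neighborFinset, Finset.mem_erase, Finset.mem_filter, cg_adj]
      constructor
      · rintro ⟨h1, h2⟩
        exact ⟨fun h => h1 h.symm, Finset.mem_univ _, h2.symm⟩
      · rintro ⟨h1, _, h2⟩
        exact ⟨fun h => h1 h.symm, h2.symm⟩
    rw [he, Finset.card_erase_of_mem]
    rw [Finset.mem_filter]
    exact ⟨Finset.mem_univ _, rfl⟩
  rw [← Finset.sum_fiberwise_of_maps_to hmaps (fun x => (cliqueGraph p d).degree x)]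
  have hinner : ∀ c ∈ Finset.range (k+1),
      ∑ x ∈ (univ : Finset (Fin p)).filter (fun x => x.val / d = c),
        (cliqueGraph p d).degree x
      = (min ((c+1)*d) p - c*d) * ((min ((c+1)*d) p - c*d) - 1) := by
    intro c _
    have hc : ∀ x ∈ (univ : Finset (Fin p)).filter (fun x => x.val / d = c),
        (cliqueGraph p d).degree x = (min ((c+1)*d) p - c*d) - 1 := by
      intro x hx
      have hxc := (Finset.mem_filter.mp hx).2
      rw [hdeg x, hxc, block_card p d c hd0]
    rw [Finset.sum_congr rfl hc, Finset.sum_const_nat (fun x hx => rfl), block_card p d c hd0]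
  rw [Finset.sum_congr rfl hinner]
  have hstep : ∀ c, c < k → (min ((c+1)*d) p - c*d) = d := by
    intro c hc
    have h1 : (c+1)*d ≤ p := by
      have : (c+1) ≤ k := hc
      calc (c+1)*d ≤ k*d := Nat.mul_le_mul_right d this
        _ ≤ p := by omega
    rw [min_eq_left h1]
    have : (c+1)*d = c*d + d := by ring
    omega
  have hlast : (min ((k+1)*d) p - k*d) = r := by
    have h1 : p ≤ (k+1)*d := by
      have : (k+1)*d = k*d + d := by ring
      omega
    rw [min_eq_right h1]
    omega
  rw [Finset.sum_range_succ, hlast]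
  have hconst : ∀ c ∈ Finset.range k,
      (min ((c+1)*d) p - c*d) * ((min ((c+1)*d) p - c*d) - 1) = d * (d-1) := by
    intro c hc
    rw [hstep c (Finset.mem_range.mp hc)]
  rw [Finset.sum_congr rfl hconst, Finset.sum_const_nat (fun x hx => rfl), Finset.card_range]
  have : d - 1 = n - 2 := by omega
  rw [this]


end Construction

section Final
variable {n : ℕ}

theorem stmt9 (p n k r : ℕ) (hn : 6 ≤ n) (hp : n - 1 ≤ p) (hk : 1 ≤ k)
    (hr : r ≤ n - 2) (hpkr : p = k * (n - 1) + r)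
    (hrs : r = 0 ∨ r = n - 4 ∨ r = n - 3 ∨ r = n - 2) :
    exNum p (TnStar n) = ((n - 2) * p - r * (n - 1 - r)) / 2 := by
  have hid : (n - 2) * p = r * (n - 1 - r) + (k * ((n-1)*(n-2)) + r * (r-1)) := by
    subst hpkr
    rcases Nat.eq_zero_or_pos r with rfl | hrpos
    · simp only [Nat.zero_mul, Nat.add_zero, Nat.zero_le, Nat.sub_eq_zero_of_le, Nat.mul_zero,
        Nat.zero_add]
      ring
    · have e1 : (n - 1 - r) + (r - 1) = n - 2 := by omega
      have e2 : r * (n-2) = r * (n-1-r) + r * (r-1) := by rw [← Nat.mul_add, e1]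
      calc (n-2) * (k*(n-1) + r) = k*((n-1)*(n-2)) + r*(n-2) := by ring
        _ = k*((n-1)*(n-2)) + (r*(n-1-r) + r*(r-1)) := by rw [e2]
        _ = r*(n-1-r) + (k*((n-1)*(n-2)) + r*(r-1)) := by ring
  have hub : ∀ (G : SimpleGraph (Fin p)), ¬ ContainsCopy G (TnStar n) →
      2 * Nat.card G.edgeSet + r * (n-1-r) ≤ (n-2)*p := by
    intro G hfree
    classical
    obtain ⟨M, hMsum, hMle⟩ := main_glue hn p (Fin p) G (by simp) hfree
    have hmod : M.sum % (n-1) = r := by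
      rw [hMsum, hpkr, Nat.add_comm (k*(n-1)) r, Nat.add_mul_mod_self_right, Nat.mod_eq_of_lt (by omega)]
    have hnl := NL hn r hr hrs M hmod
    have hsum : ∑ v, G.degree v = 2 * G.edgeFinset.card :=
      G.sum_degrees_eq_twice_card_edges
    have hcard : Nat.card G.edgeSet = G.edgeFinset.card := by
      rw [Nat.card_eq_fintype_card, ← Set.toFinset_card]
      rfl
    rw [hcard]
    linarith
  have hE : 2 * (cliqueGraph p (n-1)).edgeFinset.card = k*((n-1)*(n-2)) + r*(r-1) := by
    rw [← SimpleGraph.sum_degrees_eq_twice_card_edges]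
    exact cg_degsum hn p k r hr hpkr
  have hcardE : Nat.card (cliqueGraph p (n-1)).edgeSet
      = (cliqueGraph p (n-1)).edgeFinset.card := by
    rw [Nat.card_eq_fintype_card, ← Set.toFinset_card]
    rfl
  have hET : (cliqueGraph p (n-1)).edgeFinset.card = ((n - 2) * p - r * (n - 1 - r)) / 2 := by
    set P := (n-2)*p with hP
    set B := r*(n-1-r) with hB
    set A := k*((n-1)*(n-2)) + r*(r-1) with hA
    omega
  have hmem : ((n - 2) * p - r * (n - 1 - r)) / 2 ∈
      {m : ℕ | ∃ G : SimpleGraph (Fin p), ¬ ContainsCopy G (TnStar n) ∧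
        Nat.card G.edgeSet = m} :=
    ⟨cliqueGraph p (n-1), cg_free hn p, by rw [hcardE, hET]⟩
  have hbound : ∀ x ∈ {m : ℕ | ∃ G : SimpleGraph (Fin p), ¬ ContainsCopy G (TnStar n) ∧
      Nat.card G.edgeSet = m}, x ≤ ((n - 2) * p - r * (n - 1 - r)) / 2 := by
    rintro x ⟨G, hfree, hx⟩
    have h := hub G hfree
    rw [hx] at h
    set P := (n-2)*p with hP
    set B := r*(n-1-r) with hB
    set A := k*((n-1)*(n-2)) + r*(r-1) with hA
    omega
  rw [exNum]
  exact le_antisymm (csSup_le ⟨_, hmem⟩ hbound)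
    (le_csSup ⟨_, fun x hx => hbound x hx⟩ hmem)

end Final
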